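/- If r1 > r2 and r1·r2 > 0, then ψ_{r1,r2}(t) = r1 - r2 + r2·e^{r1·t} - r1·e^{r2·t} > 0 for every real t ≠ 0. -/

import Mathlib

noncomputable def psi (r1 r2 t : ℝ) : ℝ :=
  r1 - r2 + r2 * Real.exp (r1 * t) - r1 * Real.exp (r2 * t)

lemma psi_hasDerivAt (r1 r2 t : ℝ) :
    HasDerivAt (psi r1 r2) (r1 * r2 * (Real.exp (r1 * t) - Real.exp (r2 * t))) t := by
  have e1 : HasDerivAt (fun t : ℝ => Real.exp (r1 * t)) (Real.exp (r1 * t) * r1) t :=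
    (Real.hasDerivAt_exp (r1 * t)).comp t (by simpa using (hasDerivAt_id t).const_mul r1)
  have e2 : HasDerivAt (fun t : ℝ => Real.exp (r2 * t)) (Real.exp (r2 * t) * r2) t :=
    (Real.hasDerivAt_exp (r2 * t)).comp t (by simpa using (hasDerivAt_id t).const_mul r2)
  have := ((hasDerivAt_const t (r1 - r2)).add (e1.const_mul r2)).sub (e2.const_mul r1)
  exact this.congr_deriv (by ring)

lemma psi_zero (r1 r2 : ℝ) : psi r1 r2 0 = 0 := by simp [psi]

theorem psi_pos (r1 r2 : ℝ) (h1 : r1 > r2) (h2 : r1 * r2 > 0) :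
    ∀ t : ℝ, t ≠ 0 → psi r1 r2 t > 0 := by
  have hcont : Continuous (psi r1 r2) := by
    unfold psi; continuity
  have hderiv : ∀ x : ℝ, deriv (psi r1 r2) x
      = r1 * r2 * (Real.exp (r1 * x) - Real.exp (r2 * x)) := fun x =>
    (psi_hasDerivAt r1 r2 x).deriv
  intro t ht
  rcases ht.lt_or_gt with hlt | hgt
  · have hanti : StrictAntiOn (psi r1 r2) (Set.Iic 0) := by
      apply strictAntiOn_of_deriv_neg (convex_Iic 0) hcont.continuousOn
      intro x hx
      rw [interior_Iic] at hx
      rw [hderiv x]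
      apply mul_neg_of_pos_of_neg h2
      have : r1 * x < r2 * x := by nlinarith [hx.out]
      simpa using Real.exp_lt_exp.mpr this
    have := hanti hlt.le (le_refl (0:ℝ)) hlt
    simpa [psi_zero] using this
  · have hmono : StrictMonoOn (psi r1 r2) (Set.Ici 0) := by
      apply strictMonoOn_of_deriv_pos (convex_Ici 0) hcont.continuousOn
      intro x hx
      rw [interior_Ici] at hx
      rw [hderiv x]
      apply mul_pos h2
      have : r2 * x < r1 * x := by nlinarith [hx.out]
      simpa using Real.exp_lt_exp.mpr this
    have := hmono (le_refl (0:ℝ)) hgt.le hgt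
    simpa [psi_zero] using this
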